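/- Let A be an n×n matrix over a totally ordered group; define a weighted directed graph G on {0,1,...,n} with edge weights w_{i,0} := 0 and w_{i,j} := a_{i,i} − a_{j,i} for i,j ∈ [1,n]. Then the diagonal entries a_{i,i} of A form a maximal transversal sum (Σ_i a_{i,i} = 𝒪_A) if and only if G admits no directed cycle of strictly negative total weight. -/

import Mathlib

/-- The tropical determinant of an `n × n` matrix over a totally ordered
commutative group. -/
def tropDet {n : ℕ} {M : Type*} [AddCommGroup M] [LinearOrder M] [IsOrderedAddMonoid M]
    (A : Fin n → Fin n → M) : M :=
  Finset.univ.sup' ⟨1, Finset.mem_univ 1⟩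
    fun σ : Equiv.Perm (Fin n) => ∑ i, A i (σ i)

/-- Weight of the directed walk starting at `i`, passing through the vertices
of the list, and ending at `j`, where the edge `(i, j)` has weight
`w_{i,j} := a_{i,i} − a_{j,i}`. -/
def pathW {n : ℕ} {M : Type*} [AddCommGroup M] [LinearOrder M] [IsOrderedAddMonoid M]
    (A : Fin n → Fin n → M) : Fin n → List (Fin n) → Fin n → M
  | i, [], j => A i i - A j i
  | i, k :: r, j => (A i i - A k i) + pathW A k r j

section

variable {n : ℕ} {M : Type*} [AddCommGroup M] [LinearOrder M] [IsOrderedAddMonoid M] (A : Fin n → Fin n → M)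

lemma pathW_nil (i j : Fin n) : pathW A i [] j = A i i - A j i := rfl

lemma pathW_cons (i k j : Fin n) (r : List (Fin n)) :
    pathW A i (k :: r) j = (A i i - A k i) + pathW A k r j := rfl

lemma pathW_append (p q : List (Fin n)) (i k j : Fin n) :
    pathW A i (p ++ k :: q) j = pathW A i p k + pathW A k q j := by
  induction p generalizing i with
  | nil => simp [pathW_nil, pathW_cons]
  | cons a r ih => simp [pathW_cons, ih, add_assoc]

lemma pathW_chain (g : ℕ → Fin n) (k : ℕ) :
    pathW A (g 0) ((List.range k).map fun t => g (t + 1)) (g (k + 1)) =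
      ∑ t ∈ Finset.range (k + 1), (A (g t) (g t) - A (g (t + 1)) (g t)) := by
  induction k generalizing g with
  | zero => simp [pathW_nil]
  | succ k ih =>
    have h := ih (fun t => g (t + 1))
    rw [List.range_succ_eq_map, List.map_cons, List.map_map, pathW_cons,
      Finset.sum_range_succ']
    simp only [Function.comp_def, Nat.succ_eq_add_one] at h ⊢
    rw [h]
    exact add_comm _ _

lemma sum_shift (φ : ℕ → M) (m : ℕ) (h : φ m = φ 0) :
    ∑ t ∈ Finset.range m, φ (t + 1) = ∑ t ∈ Finset.range m, φ t := by
  have h1 := Finset.sum_range_succ φ m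
  have h2 := Finset.sum_range_succ' φ m
  rw [h] at h1
  rw [h1] at h2
  exact (add_right_cancel h2).symm

/-- A cycle through a duplicate-free list of vertices corresponds to a
permutation. -/
lemma nodup_cycle (i : Fin n) (p : List (Fin n)) (hl : (i :: p).Nodup) :
    ∃ σ : Equiv.Perm (Fin n),
      pathW A i p i = ∑ j, A j j - ∑ j, A j (σ j) := by
  set l : List (Fin n) := i :: p with hldef
  have hlen : 0 < l.length := by simp [hldef]
  set g : ℕ → Fin n := fun t => l[t % l.length]'(Nat.mod_lt _ hlen) with hg
  refine ⟨l.formPerm⁻¹, ?_⟩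
  set σ := l.formPerm⁻¹ with hσdef
  have hg0 : g 0 = i := by simp [hg, hldef]
  have hgl : g l.length = i := by simp [hg, hldef]
  have hglen : l.length = p.length + 1 := by simp [hldef]
  -- path = telescoping sum
  have hmap : (List.range p.length).map (fun t => g (t + 1)) = p := by
    apply List.ext_getElem (by simp)
    intro t h1 h2
    simp only [List.getElem_map, List.getElem_range, hg]
    have : (t + 1) % l.length = t + 1 := Nat.mod_eq_of_lt (by omega)
    simp only [hldef] at this ⊢
    simp only [this, List.getElem_cons_succ]
  have hchain : pathW A i p i =
      ∑ t ∈ Finset.range l.length, (A (g t) (g t) - A (g (t + 1)) (g t)) := by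
    have := pathW_chain A g p.length
    rw [hg0, hmap, ← hglen, hgl] at this
    rw [this, hglen]
  -- formPerm facts
  have hform : ∀ t, l.formPerm (g t) = g (t + 1) := by
    intro t
    have ht : t % l.length < l.length := Nat.mod_lt _ hlen
    rw [hg]
    simp only
    rw [List.formPerm_apply_getElem l hl (t % l.length) ht]
    congr 1
    exact Nat.mod_add_mod t l.length 1
  have hσg : ∀ t, σ (g (t + 1)) = g t := by
    intro t
    rw [← hform t, hσdef, Equiv.Perm.inv_def, Equiv.symm_apply_apply]
  -- sums over the list
  have hinj : ∀ x ∈ Finset.range l.length, ∀ y ∈ Finset.range l.length,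
      g x = g y → x = y := by
    intro x hx y hy hxy
    simp only [Finset.mem_range] at hx hy
    have hx' : x % l.length = x := Nat.mod_eq_of_lt hx
    have hy' : y % l.length = y := Nat.mod_eq_of_lt hy
    rw [hg] at hxy
    simp only at hxy
    rw [hl.getElem_inj_iff] at hxy
    omega
  have himg : l.toFinset = (Finset.range l.length).image g := by
    ext j
    simp only [List.mem_toFinset, Finset.mem_image, Finset.mem_range]
    constructor
    · intro hj
      obtain ⟨t, ht, rfl⟩ := List.mem_iff_getElem.mp hj
      exact ⟨t, ht, by simp [hg, Nat.mod_eq_of_lt ht]⟩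
    · rintro ⟨t, ht, rfl⟩
      exact List.getElem_mem _
  -- rewrite the second part of each summand
  have hrw : ∀ t, A (g (t + 1)) (g t) = A (g (t + 1)) (σ (g (t + 1))) := by
    intro t; rw [hσg]
  have hsplit : ∑ t ∈ Finset.range l.length, (A (g t) (g t) - A (g (t + 1)) (g t)) =
      ∑ t ∈ Finset.range l.length, (A (g t) (g t) - A (g t) (σ (g t))) := by
    rw [Finset.sum_sub_distrib, Finset.sum_sub_distrib]
    congr 1
    calc ∑ t ∈ Finset.range l.length, A (g (t + 1)) (g t)
        = ∑ t ∈ Finset.range l.length, A (g (t + 1)) (σ (g (t + 1))) := by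
          exact Finset.sum_congr rfl fun t _ => hrw t
      _ = ∑ t ∈ Finset.range l.length, A (g t) (σ (g t)) :=
          sum_shift (fun t => A (g t) (σ (g t))) l.length (by simp only [hgl, hg0])
  have hext : ∑ t ∈ Finset.range l.length, (A (g t) (g t) - A (g t) (σ (g t))) =
      ∑ j, (A j j - A j (σ j)) := by
    rw [show (∑ t ∈ Finset.range l.length, (A (g t) (g t) - A (g t) (σ (g t)))) =
        ∑ j ∈ (Finset.range l.length).image g, (A j j - A j (σ j)) from
      (Finset.sum_image (f := fun j : Fin n => A j j - A j (σ j)) hinj).symm, ← himg]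
    apply Finset.sum_subset (Finset.subset_univ _)
    intro j _ hj
    rw [List.mem_toFinset] at hj
    have : σ j = j := by
      rw [hσdef, Equiv.Perm.inv_eq_iff_eq, List.formPerm_apply_of_notMem hj]
    rw [this, sub_self]
  rw [hchain, hsplit, hext, Finset.sum_sub_distrib]


lemma exists_dup_decomp {α : Type*} {l : List α} (h : ¬ l.Nodup) :
    ∃ (x : α) (q1 q2 q3 : List α), l = q1 ++ x :: (q2 ++ x :: q3) := by
  induction l with
  | nil => simp at h
  | cons a r ih =>
    rw [List.nodup_cons] at h
    by_cases ha : a ∈ r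
    · obtain ⟨s, t, rfl⟩ := List.append_of_mem ha
      exact ⟨a, [], s, t, rfl⟩
    · have hr : ¬ r.Nodup := by tauto
      obtain ⟨x, q1, q2, q3, rfl⟩ := ih hr
      exact ⟨x, a :: q1, q2, q3, rfl⟩

lemma cycles_nonneg (h : ∀ σ : Equiv.Perm (Fin n), ∑ j, A j (σ j) ≤ ∑ j, A j j) :
    ∀ (i : Fin n) (p : List (Fin n)), 0 ≤ pathW A i p i := by
  have base : ∀ (i : Fin n) (p : List (Fin n)), (i :: p).Nodup → 0 ≤ pathW A i p i := by
    intro i p hl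
    obtain ⟨σ, hσ⟩ := nodup_cycle A i p hl
    rw [hσ]
    exact sub_nonneg.mpr (h σ)
  suffices H : ∀ (N : ℕ) (p : List (Fin n)), p.length ≤ N → ∀ i, 0 ≤ pathW A i p i by
    intro i p; exact H p.length p le_rfl i
  intro N
  induction N with
  | zero =>
    intro p hp i
    rw [List.length_eq_zero_iff.mp (Nat.le_zero.mp hp)]
    exact base i [] (by simp)
  | succ N ihN =>
    intro p hp i
    by_cases hl : (i :: p).Nodup
    · exact base i p hl
    · obtain ⟨x, q1, q2, q3, he⟩ := exists_dup_decomp hl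
      cases q1 with
      | nil =>
        simp only [List.nil_append, List.cons.injEq] at he
        obtain ⟨rfl, rfl⟩ := he
        rw [pathW_append]
        have hlen : q2.length + q3.length + 1 ≤ N + 1 := by
          simp [List.length_append] at hp; omega
        exact add_nonneg (ihN q2 (by omega) i) (ihN q3 (by omega) i)
      | cons a q1' =>
        simp only [List.cons_append, List.cons.injEq] at he
        obtain ⟨rfl, rfl⟩ := he
        have e1 : pathW A i (q1' ++ x :: (q2 ++ x :: q3)) i =
            pathW A i (q1' ++ x :: q3) i + pathW A x q2 x := by
          rw [pathW_append, pathW_append, pathW_append]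
          abel
        rw [e1]
        have hlen : q1'.length + q2.length + q3.length + 2 ≤ N + 1 := by
          simp [List.length_append] at hp; omega
        refine add_nonneg (ihN _ ?_ i) (ihN q2 (by omega) x)
        simp only [List.length_append, List.length_cons]
        omega

lemma perm_sum_le (h : ∀ (i : Fin n) (p : List (Fin n)), 0 ≤ pathW A i p i) :
    ∀ σ : Equiv.Perm (Fin n), ∑ j, A j (σ j) ≤ ∑ j, A j j := by
  suffices H : ∀ (N : ℕ) (σ : Equiv.Perm (Fin n)), σ.support.card ≤ N →
      ∑ j, A j (σ j) ≤ ∑ j, A j j from fun σ => H _ σ le_rfl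
  intro N
  induction N with
  | zero =>
    intro σ hσ
    have : σ = 1 := by
      rw [← Equiv.Perm.support_eq_empty_iff]
      exact Finset.card_eq_zero.mp (Nat.le_zero.mp hσ)
    simp [this]
  | succ N ihN =>
    intro σ hσ
    by_cases h1 : σ = 1
    · simp [h1]
    obtain ⟨i, hi⟩ : ∃ i, σ i ≠ i := by
      by_contra hc
      push_neg at hc
      exact h1 (Equiv.ext hc)
    set m := Function.minimalPeriod (⇑σ⁻¹) i with hmdef
    set g : ℕ → Fin n := fun t => (σ⁻¹ ^ t) i with hgdef
    have hfg : ∀ t, g t = (⇑σ⁻¹)^[t] i := by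
      intro t; rw [Equiv.Perm.iterate_eq_pow]
    have hper : i ∈ Function.periodicPts (⇑σ⁻¹) := by
      refine ⟨orderOf σ⁻¹, orderOf_pos σ⁻¹, ?_⟩
      show (⇑σ⁻¹)^[orderOf σ⁻¹] i = i
      rw [Equiv.Perm.iterate_eq_pow, pow_orderOf_eq_one]
      rfl
    have hm : 0 < m := Function.minimalPeriod_pos_of_mem_periodicPts hper
    have hg0 : g 0 = i := by simp only [hgdef, pow_zero, Equiv.Perm.one_apply]
    have hgm : g m = i := by
      rw [hfg]; exact Function.iterate_minimalPeriod
    have hsucc : ∀ t, g (t + 1) = σ⁻¹ (g t) := by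
      intro t
      simp only [hgdef, pow_succ' σ⁻¹ t, Equiv.Perm.mul_apply]
    have hσg : ∀ t, σ (g (t + 1)) = g t := by
      intro t; rw [hsucc, Equiv.Perm.inv_def, Equiv.apply_symm_apply]
    have hinj : ∀ x ∈ Finset.range m, ∀ y ∈ Finset.range m, g x = g y → x = y := by
      intro x hx y hy hxy
      simp only [Finset.mem_range] at hx hy
      refine Function.iterate_injOn_Iio_minimalPeriod (f := ⇑σ⁻¹) (x := i) hx hy ?_
      show (⇑σ⁻¹)^[x] i = (⇑σ⁻¹)^[y] i
      rw [← hfg, ← hfg]; exact hxy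
    set L : List (Fin n) := (List.range m).map g with hLdef
    have hLmem : ∀ j, j ∈ L ↔ ∃ t < m, g t = j := by
      intro j; simp [hLdef, List.mem_map, List.mem_range]
    have hLnd : L.Nodup := by
      refine List.Nodup.map_on ?_ List.nodup_range
      intro x hx y hy
      exact hinj x (by simpa using hx) y (by simpa using hy)
    have hLlen : L.length = m := by simp [hLdef]
    have hformL : ∀ j ∈ L, L.formPerm j = σ⁻¹ j := by
      intro j hj
      obtain ⟨t, ht, rfl⟩ := (hLmem j).mp hj
      have h1 : L[t]'(by omega) = g t := by simp [hLdef]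
      have h2 : L.formPerm (L[t]'(by rw [hLlen]; omega)) =
          L[(t + 1) % L.length]'(Nat.mod_lt _ (by rw [hLlen]; omega)) :=
        List.formPerm_apply_getElem L hLnd t (by rw [hLlen]; omega)
      rw [h1] at h2
      rw [h2, ← hsucc t]
      have hmod : (t + 1) % L.length < m := by rw [hLlen]; exact Nat.mod_lt _ hm
      have : L[(t + 1) % L.length]'(by rw [hLlen]; exact Nat.mod_lt _ hm) =
          g ((t + 1) % m) := by simp [hLdef, hLlen]
      rw [this]
      rw [hfg ((t+1) % m), hfg (t+1), hmdef]
      exact Function.iterate_mod_minimalPeriod_eq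
    set τ : Equiv.Perm (Fin n) := σ * L.formPerm with hτdef
    have hτL : ∀ j ∈ L, τ j = j := by
      intro j hj
      rw [hτdef, Equiv.Perm.mul_apply, hformL j hj, Equiv.Perm.inv_def, Equiv.apply_symm_apply]
    have hτnL : ∀ j ∉ L, τ j = σ j := by
      intro j hj
      rw [hτdef, Equiv.Perm.mul_apply, List.formPerm_apply_of_notMem hj]
    have hiL : i ∈ L := (hLmem i).mpr ⟨0, hm, hg0⟩
    have hτcard : τ.support.card ≤ N := by
      have hsub : τ.support ⊆ σ.support.erase i := by
        intro j hj
        rw [Equiv.Perm.mem_support] at hj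
        have hjL : j ∉ L := fun hmem => hj (hτL j hmem)
        rw [Finset.mem_erase, Equiv.Perm.mem_support]
        refine ⟨fun hji => hjL (hji ▸ hiL), ?_⟩
        rw [← hτnL j hjL]
        exact hj
      have := Finset.card_le_card hsub
      rw [Finset.card_erase_of_mem (Equiv.Perm.mem_support.mpr hi)] at this
      omega
    have hIH := ihN τ hτcard
    set S : Finset (Fin n) := L.toFinset with hSdef
    have himg : S = (Finset.range m).image g := by
      ext j
      simp only [hSdef, List.mem_toFinset, Finset.mem_image, Finset.mem_range, hLmem]
    -- key inequality on S
    have hkey : ∑ j ∈ S, A j (σ j) ≤ ∑ j ∈ S, A j j := by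
      have h0 := h i ((List.range (m - 1)).map fun t => g (t + 1))
      have hc := pathW_chain A g (m - 1)
      rw [show m - 1 + 1 = m from by omega, hg0, hgm] at hc
      rw [hc] at h0
      rw [Finset.sum_sub_distrib] at h0
      have hstep : ∑ t ∈ Finset.range m, A (g (t + 1)) (g t) =
          ∑ t ∈ Finset.range m, A (g t) (σ (g t)) := by
        calc ∑ t ∈ Finset.range m, A (g (t + 1)) (g t)
            = ∑ t ∈ Finset.range m, A (g (t + 1)) (σ (g (t + 1))) :=
              Finset.sum_congr rfl fun t _ => by rw [hσg]
          _ = ∑ t ∈ Finset.range m, A (g t) (σ (g t)) :=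
              sum_shift (fun t => A (g t) (σ (g t))) m (by simp only [hgm, hg0])
      rw [hstep] at h0
      have e1 : ∑ t ∈ Finset.range m, A (g t) (g t) = ∑ j ∈ S, A j j := by
        rw [himg, Finset.sum_image hinj]
      have e2 : ∑ t ∈ Finset.range m, A (g t) (σ (g t)) = ∑ j ∈ S, A j (σ j) := by
        rw [himg, Finset.sum_image hinj]
      rw [e1, e2] at h0
      exact sub_nonneg.mp h0
    calc ∑ j, A j (σ j)
        = ∑ j ∈ S, A j (σ j) + ∑ j ∈ Sᶜ, A j (σ j) :=
          (Finset.sum_add_sum_compl S _).symm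
      _ ≤ ∑ j ∈ S, A j j + ∑ j ∈ Sᶜ, A j (σ j) := by
          exact add_le_add_left hkey _
      _ = ∑ j ∈ S, A j (τ j) + ∑ j ∈ Sᶜ, A j (τ j) := by
          congr 1
          · exact Finset.sum_congr rfl fun j hj => by
              rw [hτL j (List.mem_toFinset.mp hj)]
          · exact Finset.sum_congr rfl fun j hj => by
              rw [hτnL j (fun hm' => (Finset.mem_compl.mp hj) (List.mem_toFinset.mpr hm'))]
      _ = ∑ j, A j (τ j) := Finset.sum_add_sum_compl S _
      _ ≤ ∑ j, A j j := hIH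

end

/-- The diagonal entries of `A` form a maximal transversal sum iff the
associated weighted directed graph (with `w_{i,j} = a_{i,i} − a_{j,i}`)
admits no directed cycle of strictly negative total weight. -/
theorem diag_maximal_iff_no_negative_cycle {n : ℕ} {M : Type*}
    [AddCommGroup M] [LinearOrder M] [IsOrderedAddMonoid M] (A : Fin n → Fin n → M) :
    (∑ i, A i i = tropDet A) ↔
      ∀ (i : Fin n) (p : List (Fin n)), 0 ≤ pathW A i p i := by
  constructor
  · intro h i p
    refine cycles_nonneg A (fun σ => ?_) i p
    rw [h]
    exact Finset.le_sup' (f := fun σ : Equiv.Perm (Fin n) => ∑ i, A i (σ i))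
      (Finset.mem_univ σ)
  · intro h
    apply le_antisymm
    · have := Finset.le_sup' (fun σ : Equiv.Perm (Fin n) => ∑ i, A i (σ i))
        (Finset.mem_univ (1 : Equiv.Perm (Fin n)))
      simpa [tropDet] using this
    · exact Finset.sup'_le _ _ fun σ _ => perm_sum_le A h σ
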